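/- For every l ∈ {1,...,k} and every x ∈ {l+1,...,n}, one has l · c_l(x) = c_{l-1}(x-1) - c_{l-1}(x). -/

import Mathlib

open Finset

namespace Secretary

/-- Binomial coefficient on integers: zero when `b < 0` or `b > a`. -/
noncomputable def Cb (a b : ℤ) : ℝ :=
  if 0 ≤ b ∧ b ≤ a then (Nat.choose a.toNat b.toNat : ℝ) else 0

/-- The value `π(i)` of a permutation of `{1,...,n}` in 1-based indexing. -/
def pv (n : ℕ) (π : Equiv.Perm (Fin n)) (i : ℕ) : ℕ :=
  if h : i - 1 < n then ((π ⟨i - 1, h⟩ : Fin n) : ℕ) + 1 else 0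

/-- The relative rank `ρ_π(i)`: the number of `j ∈ {1,...,i}` with `π(j) ≤ π(i)`. -/
def rho (n : ℕ) (π : Equiv.Perm (Fin n)) (i : ℕ) : ℕ :=
  ((Finset.Icc 1 i).filter fun j => pv n π j ≤ pv n π i).card

/-- Extension of a sequence `s` with `s (k+1) = n - 1`. -/
def sExt (n k : ℕ) (s : ℕ → ℕ) (l : ℕ) : ℕ := if l = k + 1 then n - 1 else s l

/-- `i` is a `(π, l, w)`-element. -/
def IsElem (n k : ℕ) (s : ℕ → ℕ) (π : Equiv.Perm (Fin n)) (l i : ℕ) : Prop :=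
  sExt n k s l < i ∧ i ≤ sExt n k s (l + 1) ∧ rho n π i ≤ l

/-- `l` is a `w`-threshold of `π`. -/
def IsThreshold (n k : ℕ) (s : ℕ → ℕ) (π : Equiv.Perm (Fin n)) (l : ℕ) : Prop :=
  1 ≤ l ∧ l ≤ k ∧ ∃ i, IsElem n k s π l i

open Classical in
/-- `π` is a lucky permutation for the sequence `w = s`. -/
def Lucky (n k : ℕ) (s : ℕ → ℕ) (π : Equiv.Perm (Fin n)) : Prop :=
  if ∃ l, IsThreshold n k s π l then
    pv n π (sInf {i | IsElem n k s π (sInf {l | IsThreshold n k s π l}) i}) ≤ k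
  else pv n π n ≤ k

/-- The maps `r_l` (first argument an integer `l ≤ k`). -/
noncomputable def rr (n k : ℕ) (l : ℤ) (x : ℕ) : ℝ :=
  if l < 0 then 0
  else if l = 0 then
    1 / (x : ℝ) - (k : ℝ) / n - Cb ((n : ℤ) - x - 1) k / ((x : ℝ) * Cb n k)
      - (1 / Cb n k) * ∑ j ∈ Finset.Icc 1 x, Cb ((n : ℤ) - j - 1) ((k : ℤ) - 1) / (j : ℝ)
  else
    ((Nat.factorial (x - l.toNat - 1) : ℝ) / (Nat.factorial x : ℝ)) *
      (1 - (1 / ((l : ℝ) * Cb n x)) *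
        ∑ j ∈ Finset.range (l.toNat + 1),
          ((l : ℝ) - j) * Cb k j * Cb ((n : ℤ) - k) ((x : ℤ) - j))

/-- The constant `δ_{k,n}`. -/
noncomputable def delta (n k : ℕ) : ℝ :=
  if k = 1 then -(1 / (n : ℝ)) * ∑ j ∈ Finset.Icc 1 (n - 1), (1 : ℝ) / j
  else (Nat.factorial (n - k) : ℝ) / (Nat.factorial n : ℝ)

/-- The maps `d_l` for `0 ≤ l ≤ k`. -/
noncomputable def d (n k : ℕ) (l x : ℕ) : ℝ :=
  if l = 0 then
    -1 + (k : ℝ) * x / n + Cb ((n : ℤ) - x - 1) k / Cb n k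
      + ((x : ℝ) / Cb n k) * ∑ j ∈ Finset.Icc 1 x, Cb ((n : ℤ) - j - 1) ((k : ℤ) - 1) / (j : ℝ)
  else if l = 1 then
    -((k : ℝ) / n) - (1 / Cb n k) * ∑ j ∈ Finset.Icc 1 x, Cb ((n : ℤ) - j - 1) ((k : ℤ) - 1) / (j : ℝ)
  else
    ((k : ℝ) * (Nat.factorial x : ℝ) * (Nat.factorial (n - l - x) : ℝ) /
        ((l : ℝ) * ((l : ℝ) - 1) * (Nat.factorial n : ℝ))) *
      ∑ j ∈ Finset.range (l - 1), Cb ((k : ℤ) - 1) j * Cb ((n : ℤ) - k) ((x : ℤ) + l - j - 1)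

/-- The maps `c_l(x) = d_l(x - l)`. -/
noncomputable def c (n k l x : ℕ) : ℝ := d n k l (x - l)

/-- The constant `ξ_{k,n}`. -/
noncomputable def xi (n k : ℕ) : ℝ :=
  (k : ℝ) * (Nat.factorial (n - k - 1) : ℝ) / (Nat.factorial n : ℝ)

/-- `w` (given as a 1-indexed function) is a word in `X^{(k-l)}`, i.e. its `j`-th letter
belongs to `X_{l+j} = {l+j, ..., n-1}` for `1 ≤ j ≤ k - l`. -/
def memX (n k l : ℕ) (w : ℕ → ℕ) : Prop :=
  ∀ j ∈ Finset.Icc 1 (k - l), l + j ≤ w j ∧ w j ≤ n - 1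

/-- The left-shift operator removing the first `l` letters of a word. -/
def shift (l : ℕ) (w : ℕ → ℕ) : ℕ → ℕ := fun j => w (l + j)

/-- The maps `R_{l,j}`. -/
noncomputable def Rmap (n k l : ℕ) (w : ℕ → ℕ) (j : ℕ) : ℝ :=
  if 1 ≤ j ∧ j ≤ k - l then
    rr n k ((l : ℤ) + j - 1) (w j)
      - rr n k ((l : ℤ) + j - 1) (if j = k - l then n - 1 else w (j + 1))
  else 0

/-- The maps `Γ_{l,j,j'}`. -/
noncomputable def Gam (n k l j j' : ℕ) (w : ℕ → ℕ) : ℝ :=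
  if 1 ≤ j ∧ j ≤ j' ∧ j' ≤ k - l then
    ∏ t ∈ Finset.Icc j j', ((w t : ℝ) - l - t + 1)
  else 1

/-- The maps `T_l`. -/
noncomputable def Tmap (n k l : ℕ) (w : ℕ → ℕ) : ℝ :=
  (∑ j ∈ Finset.Icc 1 (k - l), Rmap n k l w j * Gam n k l 1 j w)
    + xi n k * Gam n k l 1 (k - l) w

/-- The maps `D_l(w) = r_{l-1}(x_1) - T_l(w)`, with `x_1 := n-1` when `l = k`. -/
noncomputable def Dmap (n k l : ℕ) (w : ℕ → ℕ) : ℝ :=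
  rr n k ((l : ℤ) - 1) (if l = k then n - 1 else w 1) - Tmap n k l w

/-- The maps `F_{l,w}(x) = -c_{l-1}(x) - x·D_l(w)`. -/
noncomputable def Fmap (n k l : ℕ) (w : ℕ → ℕ) (x : ℕ) : ℝ :=
  -(c n k (l - 1) x) - (x : ℝ) * Dmap n k l w

/-- The maps `a_l`. -/
noncomputable def amap (n k l x : ℕ) : ℝ :=
  (1 / Cb n x) * ∑ j ∈ Finset.range (l + 1), Cb k j * Cb ((n : ℤ) - k) ((x : ℤ) - j)

/-- The maps `b_l`. -/
noncomputable def bmap (n k l x : ℕ) : ℝ :=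
  (1 / ((l : ℝ) * Cb n x)) *
    ∑ j ∈ Finset.range (l + 1), (j : ℝ) * Cb k j * Cb ((n : ℤ) - k) ((x : ℤ) - j)

/-- `π ∈ S(l0, i0)`: `π` is lucky for `s`, `l0` is the smallest `s`-threshold of `π`,
and `i0` is the smallest `(π, l0, s)`-element. -/
def SMem (n k : ℕ) (s : ℕ → ℕ) (l0 i0 : ℕ) (π : Equiv.Perm (Fin n)) : Prop :=
  Lucky n k s π ∧ IsLeast {l | IsThreshold n k s π l} l0 ∧
    IsLeast {i | IsElem n k s π l0 i} i0

/-- `π ∈ S(Y, Y', l0, i0)`. -/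
def SYYMem (n k : ℕ) (s : ℕ → ℕ) (Y Y' : Finset ℕ) (l0 i0 : ℕ) (π : Equiv.Perm (Fin n)) :
    Prop :=
  SMem n k s l0 i0 π ∧ ((Finset.Icc 1 i0).image (pv n π)) ∩ Finset.Icc 1 k = Y ∧
    ((Finset.Icc 1 i0).image (pv n π)) ∩ Finset.Icc (k + 1) n = Y'

lemma Cb_zero {a b : ℤ} (h : ¬ (0 ≤ b ∧ b ≤ a)) : Cb a b = 0 := if_neg h

lemma Cb_pos {a b : ℤ} (h0 : 0 ≤ b) (h1 : b ≤ a) : 0 < Cb a b := by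
  rw [Cb, if_pos ⟨h0, h1⟩]
  exact_mod_cast Nat.choose_pos (by omega)

lemma Cb_natCast (a b : ℕ) : Cb (a : ℤ) (b : ℤ) = (a.choose b : ℝ) := by
  unfold Cb
  split
  · next h => simp
  · next h =>
    rw [Nat.choose_eq_zero_of_lt (by omega)]
    simp

lemma Cb_succ_mul (m t : ℤ) :
    ((t : ℝ) + 1) * Cb m (t + 1) = ((m : ℝ) - (t : ℝ)) * Cb m t := by
  rcases lt_or_ge t 0 with ht | ht
  · rcases eq_or_lt_of_le (by omega : t ≤ -1) with h | h
    · subst h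
      rw [Cb_zero (a := m) (b := (-1:ℤ)) (by omega)]
      push_cast; ring
    · rw [Cb_zero (a := m) (b := t) (by omega), Cb_zero (a := m) (b := t + 1) (by omega)]; ring
  · by_cases h : t + 1 ≤ m
    · have h0 : t ≤ m := by omega
      obtain ⟨a, rfl⟩ := Int.eq_ofNat_of_zero_le (by omega : (0:ℤ) ≤ m)
      obtain ⟨b, rfl⟩ := Int.eq_ofNat_of_zero_le ht
      have : ((b : ℤ) + 1) = ((b + 1 : ℕ) : ℤ) := by push_cast; ring
      rw [this, Cb_natCast, Cb_natCast]
      have key := Nat.choose_succ_right_eq a b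
      have hba : b ≤ a := by omega
      push_cast
      have : ((a.choose (b+1) : ℝ)) * (b+1) = (a.choose b : ℝ) * (a - b) := by
        rw [← Nat.cast_sub hba]
        exact_mod_cast congrArg (fun x : ℕ => (x : ℝ)) key
      linarith [this]
    · rw [Cb_zero (b := t + 1) (by omega)]
      by_cases h2 : t ≤ m
      · have : t = m := by omega
        subst this
        push_cast; ring
      · rw [Cb_zero (b := t) (by omega)]; ring

lemma Cb_pascal (a b : ℤ) (hb : 1 ≤ b) :
    Cb a b = Cb (a - 1) b + Cb (a - 1) (b - 1) := by
  rcases lt_or_ge a b with h | h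
  · rw [Cb_zero (by omega), Cb_zero (by omega), Cb_zero (by omega)]; ring
  · rcases eq_or_lt_of_le h with h2 | h2
    · subst h2
      rw [Cb_zero (a := b - 1) (b := b) (by omega)]
      rw [Cb, if_pos ⟨by omega, le_refl b⟩, Cb, if_pos ⟨by omega, le_refl (b-1)⟩]
      rw [Nat.choose_self, Nat.choose_self]
      ring
    · -- b < a, so b ≤ a - 1
      rw [Cb, if_pos ⟨by omega, h⟩, Cb, if_pos ⟨by omega, by omega⟩,
        Cb, if_pos ⟨by omega, by omega⟩]
      have h1 : a.toNat = (a - 1).toNat + 1 := by omega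
      have h2' : b.toNat = (b - 1).toNat + 1 := by omega
      rw [h1, h2', Nat.choose_succ_succ]
      push_cast; ring

lemma term_key (n k l y j : ℕ) :
    ((n : ℝ) - l - y + 1) * (Cb ((k:ℤ)-1) j * Cb ((n:ℤ)-k) ((y:ℤ)+l-j-2))
      - ((y:ℝ) + 1) * (Cb ((k:ℤ)-1) j * Cb ((n:ℤ)-k) ((y:ℤ)+l-j-1))
    = ((l:ℝ) - 2 - j) * Cb ((k:ℤ)-1) j * Cb ((n:ℤ)-k) ((y:ℤ)+l-j-1)
      + ((j:ℝ) + 1) * Cb ((k:ℤ)-1) ((j:ℤ)+1) * Cb ((n:ℤ)-k) ((y:ℤ)+l-j-2) := by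
  have h1 := Cb_succ_mul ((n:ℤ)-k) ((y:ℤ)+l-j-2)
  have h2 := Cb_succ_mul ((k:ℤ)-1) (j:ℤ)
  have e1 : ((y:ℤ)+l-j-2) + 1 = (y:ℤ)+l-j-1 := by ring
  rw [e1] at h1
  push_cast at h1 h2 ⊢
  linear_combination (-(Cb ((k:ℤ)-1) j)) * h1 - (Cb ((n:ℤ)-k) ((y:ℤ)+l-j-2)) * h2

lemma sum_key (n k l y : ℕ) (hl : 3 ≤ l) :
    ((l:ℝ) - 2) * ∑ j ∈ Finset.range (l-1), Cb ((k:ℤ)-1) j * Cb ((n:ℤ)-k) ((y:ℤ)+l-j-1)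
      = ((n:ℝ) - l - y + 1) * ∑ j ∈ Finset.range (l-2), Cb ((k:ℤ)-1) j * Cb ((n:ℤ)-k) ((y:ℤ)+l-j-2)
        - ((y:ℝ) + 1) * ∑ j ∈ Finset.range (l-2), Cb ((k:ℤ)-1) j * Cb ((n:ℤ)-k) ((y:ℤ)+l-j-1) := by
  have e2 : l - 1 = (l - 2) + 1 := by omega
  calc ((l:ℝ)-2) * ∑ j ∈ Finset.range (l-1), Cb ((k:ℤ)-1) j * Cb ((n:ℤ)-k) ((y:ℤ)+l-j-1)
      = (∑ j ∈ Finset.range (l-1), ((l:ℝ)-2-j) * Cb ((k:ℤ)-1) j * Cb ((n:ℤ)-k) ((y:ℤ)+l-j-1))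
        + ∑ j ∈ Finset.range (l-1), (j:ℝ) * Cb ((k:ℤ)-1) j * Cb ((n:ℤ)-k) ((y:ℤ)+l-j-1) := by
        rw [Finset.mul_sum, ← Finset.sum_add_distrib]
        exact Finset.sum_congr rfl (fun j hj => by ring)
    _ = (∑ j ∈ Finset.range (l-2), ((l:ℝ)-2-j) * Cb ((k:ℤ)-1) j * Cb ((n:ℤ)-k) ((y:ℤ)+l-j-1))
        + ∑ j ∈ Finset.range (l-2),
            ((j:ℝ)+1) * Cb ((k:ℤ)-1) ((j:ℤ)+1) * Cb ((n:ℤ)-k) ((y:ℤ)+l-(j+1)-1) := by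
        rw [e2, Finset.sum_range_succ, Finset.sum_range_succ']
        have hz1 : ((l:ℝ)-2-((l-2:ℕ):ℝ)) * Cb ((k:ℤ)-1) (l-2:ℕ) * Cb ((n:ℤ)-k) ((y:ℤ)+l-((l-2:ℕ):ℤ)-1) = 0 := by
          have : ((l-2:ℕ):ℝ) = (l:ℝ)-2 := by push_cast [Nat.cast_sub (by omega : 2 ≤ l)]; ring
          rw [this]; ring
        rw [hz1]
        norm_num
    _ = ∑ j ∈ Finset.range (l-2),
          (((l:ℝ)-2-j) * Cb ((k:ℤ)-1) j * Cb ((n:ℤ)-k) ((y:ℤ)+l-j-1)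
            + ((j:ℝ)+1) * Cb ((k:ℤ)-1) ((j:ℤ)+1) * Cb ((n:ℤ)-k) ((y:ℤ)+l-j-2)) := by
        rw [← Finset.sum_add_distrib]
        refine Finset.sum_congr rfl (fun j hj => ?_)
        congr 2
        ring
    _ = ∑ j ∈ Finset.range (l-2),
          (((n:ℝ)-l-y+1) * (Cb ((k:ℤ)-1) j * Cb ((n:ℤ)-k) ((y:ℤ)+l-j-2))
            - ((y:ℝ)+1) * (Cb ((k:ℤ)-1) j * Cb ((n:ℤ)-k) ((y:ℤ)+l-j-1))) :=
        Finset.sum_congr rfl (fun j hj => (term_key n k l y j).symm)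
    _ = _ := by rw [Finset.sum_sub_distrib, Finset.mul_sum, Finset.mul_sum]



lemma case_ge3 (n k l y : ℕ) (hl : 3 ≤ l) (hlk : l ≤ k) (hkn : k < n) (hy : 1 ≤ y)
    (hyn : y + l ≤ n) :
    (l:ℝ) * d n k l y = d n k (l-1) y - d n k (l-1) (y+1) := by
  have hl0 : l ≠ 0 := by omega
  have hl1 : l ≠ 1 := by omega
  have hm0 : l - 1 ≠ 0 := by omega
  have hm1 : l - 1 ≠ 1 := by omega
  simp only [d, if_neg hl0, if_neg hl1, if_neg hm0, if_neg hm1]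
  have s1 : ∑ j ∈ Finset.range (l-1-1), Cb ((k:ℤ)-1) j * Cb ((n:ℤ)-k) ((y:ℤ)+(l-1:ℕ)-j-1)
      = ∑ j ∈ Finset.range (l-2), Cb ((k:ℤ)-1) j * Cb ((n:ℤ)-k) ((y:ℤ)+l-j-2) := by
    rw [show l-1-1 = l-2 from by omega]
    refine Finset.sum_congr rfl (fun j hj => ?_)
    congr 2
    push_cast [Nat.cast_sub (show 1 ≤ l by omega)]
    ring
  have s2 : ∑ j ∈ Finset.range (l-1-1), Cb ((k:ℤ)-1) j * Cb ((n:ℤ)-k) (((y+1:ℕ):ℤ)+(l-1:ℕ)-j-1)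
      = ∑ j ∈ Finset.range (l-2), Cb ((k:ℤ)-1) j * Cb ((n:ℤ)-k) ((y:ℤ)+l-j-1) := by
    rw [show l-1-1 = l-2 from by omega]
    refine Finset.sum_congr rfl (fun j hj => ?_)
    congr 2
    push_cast [Nat.cast_sub (show 1 ≤ l by omega)]
    ring
  rw [s1, s2]
  have key := sum_key n k l y hl
  have c1 : ((l-1:ℕ):ℝ) = (l:ℝ) - 1 := by push_cast [Nat.cast_sub (show 1 ≤ l by omega)]; ring
  have f1 : n - (l-1) - y = (n-l-y) + 1 := by omega
  have f2 : n - (l-1) - (y+1) = n-l-y := by omega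
  rw [c1, f1, f2, Nat.factorial_succ, Nat.factorial_succ (y)]
  have c2 : ((n-l-y:ℕ):ℝ) = (n:ℝ) - l - y := by
    push_cast [Nat.cast_sub (show l ≤ n by omega), Nat.cast_sub (show y ≤ n - l by omega)]
    ring
  have hlr : (l:ℝ) ≠ 0 := by positivity
  have h1 : (l:ℝ) - 1 ≠ 0 := by
    have : (3:ℝ) ≤ l := by exact_mod_cast hl
    linarith
  have h2 : (l:ℝ) - 2 ≠ 0 := by
    have : (3:ℝ) ≤ l := by exact_mod_cast hl
    linarith
  have hf : ((Nat.factorial n : ℕ):ℝ) ≠ 0 := by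
    exact_mod_cast Nat.factorial_ne_zero n
  push_cast [c2]
  have hlr : (l:ℝ) ≠ 0 := hlr
  set Sl := ∑ j ∈ Finset.range (l-1), Cb ((k:ℤ)-1) j * Cb ((n:ℤ)-k) ((y:ℤ)+l-j-1) with hSl
  set S1 := ∑ j ∈ Finset.range (l-2), Cb ((k:ℤ)-1) j * Cb ((n:ℤ)-k) ((y:ℤ)+l-j-2) with hS1
  set S2 := ∑ j ∈ Finset.range (l-2), Cb ((k:ℤ)-1) j * Cb ((n:ℤ)-k) ((y:ℤ)+l-j-1) with hS2
  set K := (k:ℝ)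
  set yf := ((Nat.factorial y : ℕ):ℝ)
  set F := ((Nat.factorial (n-l-y) : ℕ):ℝ)
  set nf := ((Nat.factorial n : ℕ):ℝ)
  set lr := (l:ℝ)
  have stepA : lr * (K * yf * F / (lr * (lr - 1) * nf)) * Sl
      = (K * yf * F / ((lr - 1) * (lr - 2) * nf)) * ((lr - 2) * Sl) := by
    field_simp
  have h := stepA.trans (by rw [key] :
    (K * yf * F / ((lr - 1) * (lr - 2) * nf)) * ((lr - 2) * Sl)
      = (K * yf * F / ((lr - 1) * (lr - 2) * nf)) * (((n:ℝ)-l-y+1) * S1 - ((y:ℝ)+1) * S2))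
  linear_combination h



lemma case_1 (n k y : ℕ) (hk : 1 ≤ k) (hkn : k < n) (hy : 1 ≤ y) (hyn : y + 1 ≤ n) :
    (1:ℝ) * d n k 1 y = d n k 0 y - d n k 0 (y+1) := by
  simp only [d]
  norm_num
  rw [Finset.sum_Icc_succ_top (by omega : 1 ≤ y + 1)]
  have e : (n:ℤ) - ((y:ℤ)+1) - 1 = ((n:ℤ) - y - 1) - 1 := by ring
  have e2 : ((n:ℤ) - ↑(y+1) - 1) = ((n:ℤ) - y - 1) - 1 := by push_cast; ring
  rw [e2]
  have hp := Cb_pascal ((n:ℤ) - y - 1) k (by exact_mod_cast hk)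
  rw [hp]
  have hn : (n:ℝ) ≠ 0 := Nat.cast_ne_zero.mpr (by omega)
  have hP : Cb (n:ℤ) (k:ℤ) ≠ 0 := (Cb_pos (by positivity) (by exact_mod_cast hkn.le)).ne'
  have hy1 : (y:ℝ) + 1 ≠ 0 := by positivity
  push_cast
  rw [e]
  field_simp
  ring

lemma case_2 (n k y : ℕ) (hk : 2 ≤ k) (hkn : k < n) (hy : 1 ≤ y) (hyn : y + 2 ≤ n) :
    (2:ℝ) * d n k 2 y = d n k 1 y - d n k 1 (y+1) := by
  simp only [d]
  norm_num [Finset.sum_range_one]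
  rw [Finset.sum_Icc_succ_top (by omega : 1 ≤ y + 1)]
  have h0 : Cb ((k:ℤ)-1) (0:ℤ) = 1 := by
    rw [Cb, if_pos ⟨by omega, by omega⟩]
    norm_num
  rw [show (y:ℤ) + 2 - 1 = (y:ℤ) + 1 from by ring, h0]
  have hn : (n:ℝ) ≠ 0 := Nat.cast_ne_zero.mpr (by omega)
  have hy1 : (y:ℝ) + 1 ≠ 0 := by positivity
  by_cases hc : k + y + 1 ≤ n
  · have hA3 : Cb ((n:ℤ) - ((y+1:ℕ):ℤ) - 1) ((k:ℤ)-1) = (((n-y-2).choose (k-1) : ℕ) : ℝ) := by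
      rw [show (n:ℤ) - ((y+1:ℕ):ℤ) - 1 = ((n-y-2:ℕ):ℤ) by omega,
        show (k:ℤ)-1 = ((k-1:ℕ):ℤ) by omega]
      exact Cb_natCast _ _
    have hB : Cb ((n:ℤ) - k) ((y:ℤ)+1) = (((n-k).choose (y+1) : ℕ) : ℝ) := by
      rw [show (n:ℤ) - k = ((n-k:ℕ):ℤ) by omega, show (y:ℤ)+1 = ((y+1:ℕ):ℤ) by omega]
      exact Cb_natCast _ _
    have hP : Cb (n:ℤ) (k:ℤ) = ((n.choose k : ℕ) : ℝ) := Cb_natCast n k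
    rw [hA3, hB, hP,
      Nat.cast_choose ℝ (show k - 1 ≤ n - y - 2 by omega),
      Nat.cast_choose ℝ (show y + 1 ≤ n - k by omega),
      Nat.cast_choose ℝ (show k ≤ n by omega)]
    rw [show n - y - 2 - (k-1) = n - k - (y+1) by omega]
    rw [show n - 2 - y = n - y - 2 by omega]
    have nz : ∀ m : ℕ, ((Nat.factorial m : ℕ) : ℝ) ≠ 0 := fun m => by
      exact_mod_cast (Nat.factorial_ne_zero m)
    push_cast
    field_simp
    have ef1 : ((Nat.factorial (y+1) : ℕ):ℝ) = ((y:ℝ) + 1) * (Nat.factorial y : ℕ) := by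
      rw [Nat.factorial_succ]; push_cast; ring
    have ef2 : ((Nat.factorial k : ℕ):ℝ) = (k:ℝ) * ((Nat.factorial (k-1) : ℕ):ℝ) := by
      rw [← Nat.mul_factorial_pred (by omega : k ≠ 0)]; push_cast; ring
    rw [ef1, ef2]
    ring
  · rw [Cb_zero (a := (n:ℤ) - ((y+1:ℕ):ℤ) - 1) (b := (k:ℤ)-1) (by omega),
      Cb_zero (a := (n:ℤ) - k) (b := (y:ℤ)+1) (by omega)]
    ring

theorem c_rec (n k : ℕ) (hk : 1 ≤ k) (hkn : k < n) :
    ∀ l ∈ Finset.Icc 1 k, ∀ x ∈ Finset.Icc (l + 1) n,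
      (l : ℝ) * c n k l x = c n k (l - 1) (x - 1) - c n k (l - 1) x := by
  intro l hl x hx
  simp only [Finset.mem_Icc] at hl hx
  obtain ⟨hl1, hlk⟩ := hl
  obtain ⟨hx1, hxn⟩ := hx
  unfold c
  rw [show x - 1 - (l-1) = x - l from by omega, show x - (l-1) = (x - l) + 1 from by omega]
  set y := x - l with hy
  have hy1 : 1 ≤ y := by omega
  have hyn : y + l ≤ n := by omega
  rcases Nat.lt_or_ge l 3 with h3 | h3
  · interval_cases l
    · simpa using case_1 n k y hk hkn hy1 (by omega)
    · simpa using case_2 n k y (by omega) hkn hy1 (by omega)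
  · exact case_ge3 n k l y h3 hlk hkn hy1 hyn
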